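/- Let 0 < A < B and Y > 0, and let z be a nonzero complex number. Then ∫_{−π}^{π} ∫_A^B min(‖Im(z R e^{iθ})‖_ℝ^{−1}, Y)^{1/2} · min(‖Re(z R e^{iθ})‖_ℝ^{−1}, Y)^{1/2} dR dθ ≪_{A,B} max(1, |z|^{−1}) · log(2 + Y). -/

import Mathlib

open Real Complex MeasureTheory intervalIntegral

/-- Distance from a real number to the nearest integer. -/
noncomputable def distNearestInt (x : ℝ) : ℝ := ⨅ m : ℤ, |x - (m : ℝ)|

/-- `min(‖y‖_ℝ^{-1}, Y)`, with the convention that the value is `Y` when `‖y‖_ℝ = 0`. -/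
noncomputable def minInvDist (y Y : ℝ) : ℝ :=
  if distNearestInt y = 0 then Y else min (distNearestInt y)⁻¹ Y

open Set

lemma mID_def (y Y : ℝ) :
    minInvDist y Y = if distNearestInt y = 0 then Y else min (distNearestInt y)⁻¹ Y := rfl

lemma dNI_bdd (x : ℝ) : BddBelow (Set.range fun m : ℤ => |x - (m : ℝ)|) :=
  ⟨0, by rintro _ ⟨m, rfl⟩; positivity⟩

lemma dNI_le (x : ℝ) (m : ℤ) : distNearestInt x ≤ |x - (m : ℝ)| :=
  ciInf_le (dNI_bdd x) m

lemma le_dNI (x b : ℝ) (h : ∀ m : ℤ, b ≤ |x - (m : ℝ)|) : b ≤ distNearestInt x :=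
  le_ciInf h

lemma dNI_nonneg (x : ℝ) : 0 ≤ distNearestInt x :=
  le_dNI x 0 fun m => abs_nonneg _

lemma dNI_add_one (x : ℝ) : distNearestInt (x + 1) = distNearestInt x := by
  apply le_antisymm
  · apply le_dNI
    intro m
    have := dNI_le (x + 1) (m + 1)
    calc distNearestInt (x+1) ≤ |x + 1 - ((m+1 : ℤ) : ℝ)| := this
    _ = |x - m| := by push_cast; ring_nf
  · apply le_dNI
    intro m
    calc distNearestInt x ≤ |x - ((m-1:ℤ) : ℝ)| := dNI_le x (m-1)
    _ = |x + 1 - m| := by push_cast; ring_nf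

lemma dNI_periodic : Function.Periodic distNearestInt 1 := dNI_add_one

lemma dNI_eq_abs {x : ℝ} (h : |x| ≤ 1/2) : distNearestInt x = |x| := by
  apply le_antisymm
  · simpa using dNI_le x 0
  · apply le_dNI
    intro m
    rcases eq_or_ne m 0 with rfl | hm
    · simp
    · have h1 : (1:ℝ) ≤ |(m:ℝ)| := by
        rw [← Int.cast_abs]
        exact_mod_cast Int.one_le_abs hm
      have : |(m:ℝ)| - |x| ≤ |x - m| := by
        have := abs_sub_abs_le_abs_sub (m:ℝ) x
        rw [abs_sub_comm] at this
        linarith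
      linarith

lemma dNI_lipschitz : LipschitzWith 1 distNearestInt := by
  apply LipschitzWith.of_dist_le_mul
  intro x y
  simp only [NNReal.coe_one, one_mul, Real.dist_eq]; rw [abs_sub_le_iff]
  constructor
  · have : distNearestInt x - |x - y| ≤ distNearestInt y := by
      apply le_dNI
      intro m
      have h1 := dNI_le x m
      have h2 := abs_sub_le x y (m : ℝ)
      linarith
    linarith [dNI_nonneg y]
  · have : distNearestInt y - |y - x| ≤ distNearestInt x := by
      apply le_dNI
      intro m
      have h1 := dNI_le y m
      have h2 := abs_sub_le y x (m : ℝ)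
      linarith
    rw [abs_sub_comm y x] at this
    linarith

lemma dNI_continuous : Continuous distNearestInt := dNI_lipschitz.continuous

lemma dNI_measurable : Measurable distNearestInt := dNI_continuous.measurable

lemma mID_measurable (Y : ℝ) : Measurable (fun y => minInvDist y Y) := by
  unfold minInvDist
  apply Measurable.ite
  · exact dNI_measurable (measurableSet_singleton 0)
  · exact measurable_const
  · exact (dNI_measurable.inv).min measurable_const

lemma mID_nonneg {y Y : ℝ} (hY : 0 < Y) : 0 ≤ minInvDist y Y := by
  unfold minInvDist
  split
  · exact hY.le
  · exact le_min (inv_nonneg.2 (dNI_nonneg y)) hY.le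

lemma mID_le_Y {y Y : ℝ} : minInvDist y Y ≤ Y := by
  unfold minInvDist
  split
  · exact le_rfl
  · exact min_le_right _ _

lemma mID_periodic (Y : ℝ) : Function.Periodic (fun y => minInvDist y Y) 1 := by
  intro x
  simp only [minInvDist, dNI_add_one]

noncomputable def uu (Y x : ℝ) : ℝ := Real.sqrt (minInvDist x Y)

lemma uu_nonneg (Y x : ℝ) : 0 ≤ uu Y x := Real.sqrt_nonneg _

lemma uu_le_sqrtY (Y x : ℝ) : uu Y x ≤ Real.sqrt Y :=
  Real.sqrt_le_sqrt mID_le_Y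

lemma uu_measurable (Y : ℝ) : Measurable (uu Y) :=
  Real.continuous_sqrt.measurable.comp (mID_measurable Y)

lemma uu_periodic (Y : ℝ) : Function.Periodic (uu Y) 1 := fun x =>
  congrArg Real.sqrt (mID_periodic Y x)

lemma dNI_neg (x : ℝ) : distNearestInt (-x) = distNearestInt x := by
  apply le_antisymm
  · apply le_dNI
    intro m
    calc distNearestInt (-x) ≤ |(-x) - ((-m : ℤ) : ℝ)| := dNI_le _ _
    _ = |x - m| := by push_cast; rw [← abs_neg]; ring_nf
  · apply le_dNI
    intro m
    calc distNearestInt x ≤ |x - ((-m : ℤ) : ℝ)| := dNI_le _ _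
    _ = |(-x) - m| := by push_cast; rw [← abs_neg]; ring_nf

lemma uu_even (Y x : ℝ) : uu Y (-x) = uu Y x := by
  unfold uu
  rw [mID_def, mID_def, dNI_neg]

lemma uu_intervalIntegrable (Y : ℝ) (a b : ℝ) : IntervalIntegrable (uu Y) volume a b := by
  rw [intervalIntegrable_iff]
  apply Integrable.mono' (g := fun _ => Real.sqrt Y) (integrableOn_const measure_Ioc_lt_top.ne)
  · exact (uu_measurable Y).aestronglyMeasurable
  · exact ae_of_all _ fun x => by
      rw [Real.norm_eq_abs, _root_.abs_of_nonneg (uu_nonneg Y x)]; exact uu_le_sqrtY Y x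

lemma uu_le_rpow {Y x : ℝ} (hx : 0 < x) (hx2 : x ≤ 1/2) : uu Y x ≤ x ^ (-(1/2) : ℝ) := by
  have hd : distNearestInt x = x := by
    rw [dNI_eq_abs (by rw [abs_of_pos hx]; exact hx2), abs_of_pos hx]
  have h1 : minInvDist x Y ≤ x⁻¹ := by
    rw [mID_def, hd, if_neg hx.ne']
    exact min_le_left _ _
  calc uu Y x ≤ Real.sqrt x⁻¹ := Real.sqrt_le_sqrt h1
  _ = x ^ (-(1/2) : ℝ) := by
      rw [Real.sqrt_inv, Real.sqrt_eq_rpow, Real.rpow_neg hx.le]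

lemma rpow_half_intInt (a b : ℝ) : IntervalIntegrable (fun x : ℝ => x ^ (-(1/2) : ℝ)) volume a b :=
  intervalIntegral.intervalIntegrable_rpow' (by norm_num)

lemma integral_rpow_half {c : ℝ} (hc : 0 ≤ c) :
    ∫ x in (0:ℝ)..c, x ^ (-(1/2) : ℝ) = 2 * Real.sqrt c := by
  rw [integral_rpow (Or.inl (by norm_num))]
  rw [Real.zero_rpow (by norm_num), Real.sqrt_eq_rpow]
  norm_num
  ring

lemma comp_sub_int : IntervalIntegrable (fun x : ℝ => (1-x) ^ (-(1/2) : ℝ)) volume 0 1 := by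
  have h := (rpow_half_intInt 0 1).comp_sub_left 1
  norm_num at h
  exact h.symm

lemma integral_uu_01 (Y : ℝ) (hY : 0 < Y) : ∫ x in (0:ℝ)..1, uu Y x ≤ 4 := by
  have key : ∫ x in (0:ℝ)..1, uu Y x ≤
      ∫ x in (0:ℝ)..1, (x ^ (-(1/2):ℝ) + (1-x) ^ (-(1/2):ℝ)) := by
    apply integral_mono_ae_restrict (by norm_num) (uu_intervalIntegrable Y 0 1)
    · exact (rpow_half_intInt 0 1).add comp_sub_int
    · have h0 : ∀ᵐ x : ℝ ∂(volume.restrict (Icc (0:ℝ) 1)), x ≠ 0 ∧ x ≠ 1 := by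
        apply Filter.Eventually.filter_mono (ae_mono Measure.restrict_le_self)
        have : ({0, 1} : Set ℝ).Finite := Set.toFinite _
        filter_upwards [this.countable.ae_notMem volume] with x hx
        simp only [Set.mem_insert_iff, Set.mem_singleton_iff] at hx
        push_neg at hx
        exact hx
      filter_upwards [ae_restrict_mem measurableSet_Icc, h0] with x hx hx01
      obtain ⟨hx0, hx1⟩ := hx01
      have h0 : 0 < x := lt_of_le_of_ne hx.1 (Ne.symm hx0)
      have h1 : x < 1 := lt_of_le_of_ne hx.2 hx1
      rcases le_or_gt x (1/2) with h | h
      · calc uu Y x ≤ x ^ (-(1/2):ℝ) := uu_le_rpow h0 h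
        _ ≤ _ := le_add_of_nonneg_right (Real.rpow_nonneg (by linarith) _)
      · have h2 := uu_periodic Y (x - 1)
        have h3 : x - 1 + 1 = x := by ring
        rw [h3] at h2
        have : uu Y x = uu Y (1 - x) := by
          rw [h2, ← uu_even Y (1 - x)]
          congr 1
          ring
        rw [this]
        calc uu Y (1-x) ≤ (1-x) ^ (-(1/2):ℝ) := uu_le_rpow (by linarith) (by linarith)
        _ ≤ _ := le_add_of_nonneg_left (Real.rpow_nonneg h0.le _)
  have calc2 : ∫ x in (0:ℝ)..1, (x ^ (-(1/2):ℝ) + (1-x) ^ (-(1/2):ℝ)) = 4 := by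
    rw [integral_add (rpow_half_intInt 0 1) comp_sub_int]
    rw [integral_comp_sub_left (fun x : ℝ => x ^ (-(1/2):ℝ)) 1]
    norm_num
    rw [integral_rpow_half (by norm_num)]
    norm_num [Real.sqrt_one]
  linarith

lemma uu_int_period (Y : ℝ) (t : ℝ) : ∫ x in t..(t+1), uu Y x = ∫ x in (0:ℝ)..1, uu Y x := by
  have h := (uu_periodic Y).intervalIntegral_add_eq t 0
  simpa using h

lemma uu_int_n (Y : ℝ) (n : ℕ) :
    ∫ x in (-(n:ℝ))..(n:ℝ), uu Y x = (2*n : ℕ) * ∫ x in (0:ℝ)..1, uu Y x := by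
  have key := intervalIntegral.sum_integral_adjacent_intervals
      (a := fun k : ℕ => -(n:ℝ) + k) (μ := volume) (f := uu Y) (n := 2*n)
      (fun k _ => uu_intervalIntegrable Y _ _)
  have h0 : -(n:ℝ) + ((0:ℕ):ℝ) = -(n:ℝ) := by norm_num
  have h1 : -(n:ℝ) + ((2*n:ℕ):ℝ) = (n:ℝ) := by push_cast; ring
  rw [h0, h1] at key
  rw [← key]
  have each : ∀ i : ℕ, ∫ x in (-(n:ℝ)+i)..(-(n:ℝ)+(i+1:ℕ)), uu Y x = ∫ x in (0:ℝ)..1, uu Y x := by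
    intro i
    have h2 : (-(n:ℝ)+((i+1:ℕ):ℝ)) = (-(n:ℝ)+i) + 1 := by push_cast; ring
    rw [h2]
    have := (uu_periodic Y).intervalIntegral_add_eq (-(n:ℝ)+i) 0
    simpa using this
  rw [Finset.sum_congr rfl (fun i _ => each i)]
  rw [Finset.sum_const, Finset.card_range, nsmul_eq_mul]

lemma oneD (Y : ℝ) (hY : 0 < Y) (c : ℝ) (hc : 0 ≤ c) :
    ∫ x in (-c)..c, uu Y x ≤ 24 * max c (Real.sqrt c) := by
  have hmax1 : c ≤ max c (Real.sqrt c) := le_max_left _ _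
  have hmax2 : Real.sqrt c ≤ max c (Real.sqrt c) := le_max_right _ _
  have hsq : 0 ≤ Real.sqrt c := Real.sqrt_nonneg c
  rcases le_or_gt c (1/2) with h | h
  · have h1 : ∫ x in (-c)..(0:ℝ), uu Y x = ∫ x in (0:ℝ)..c, uu Y x := by
      have h2 := intervalIntegral.integral_comp_neg (a := (0:ℝ)) (b := c) (f := uu Y)
      simp only [neg_zero] at h2
      rw [← h2]
      simp_rw [uu_even]
    have sym : ∫ x in (-c)..c, uu Y x = 2 * ∫ x in (0:ℝ)..c, uu Y x := by
      rw [← intervalIntegral.integral_add_adjacent_intervals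
        (uu_intervalIntegrable Y (-c) 0) (uu_intervalIntegrable Y 0 c), h1]
      ring
    have mono : ∫ x in (0:ℝ)..c, uu Y x ≤ ∫ x in (0:ℝ)..c, x ^ (-(1/2):ℝ) := by
      apply integral_mono_ae_restrict hc (uu_intervalIntegrable Y 0 c) (rpow_half_intInt 0 c)
      have h0 : ∀ᵐ x : ℝ ∂(volume.restrict (Icc (0:ℝ) c)), x ≠ 0 := by
        apply Filter.Eventually.filter_mono (ae_mono Measure.restrict_le_self)
        filter_upwards [(Set.finite_singleton (0:ℝ)).countable.ae_notMem volume] with x hx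
        simpa using hx
      filter_upwards [ae_restrict_mem measurableSet_Icc, h0] with x hx hx0
      exact uu_le_rpow (lt_of_le_of_ne hx.1 (Ne.symm hx0)) (le_trans hx.2 h)
    rw [integral_rpow_half hc] at mono
    rw [sym]
    linarith
  · set n := ⌈c⌉₊ with hn_def
    have hcn : c ≤ (n:ℝ) := Nat.le_ceil c
    have big : ∫ x in (-c)..c, uu Y x ≤ ∫ x in (-(n:ℝ))..(n:ℝ), uu Y x := by
      apply intervalIntegral.integral_mono_interval (by linarith) (by linarith) hcn
      · exact ae_of_all _ (fun x => uu_nonneg Y x)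
      · exact uu_intervalIntegrable Y _ _
    have eqn := uu_int_n Y n
    have h01 : ∫ x in (0:ℝ)..1, uu Y x ≤ 4 := integral_uu_01 Y hY
    have h01' : 0 ≤ ∫ x in (0:ℝ)..1, uu Y x :=
      intervalIntegral.integral_nonneg (by norm_num) (fun x _ => uu_nonneg Y x)
    have hn : (n:ℝ) < c + 1 := Nat.ceil_lt_add_one hc
    have step : ∫ x in (-(n:ℝ))..(n:ℝ), uu Y x ≤ 8 * (c+1) := by
      rw [eqn]
      push_cast
      nlinarith
    linarith

noncomputable def gg (Y : ℝ) : ℂ → ℝ := fun w => uu Y w.im * uu Y w.re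

lemma gg_meas (Y : ℝ) : Measurable (gg Y) :=
  ((uu_measurable Y).comp Complex.measurable_im).mul
    ((uu_measurable Y).comp Complex.measurable_re)

lemma gg_nonneg (Y : ℝ) (w : ℂ) : 0 ≤ gg Y w :=
  mul_nonneg (uu_nonneg _ _) (uu_nonneg _ _)

lemma gg_le (Y : ℝ) (hY : 0 ≤ Y) (w : ℂ) : gg Y w ≤ Y := by
  calc gg Y w ≤ Real.sqrt Y * Real.sqrt Y :=
        mul_le_mul (uu_le_sqrtY _ _) (uu_le_sqrtY _ _) (uu_nonneg _ _) (Real.sqrt_nonneg _)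
  _ = Y := Real.mul_self_sqrt hY

lemma ind_one_mul (s : Set ℝ) (f : ℝ → ℝ) (x : ℝ) :
    s.indicator (fun _ => (1:ℝ)) x * f x = s.indicator f x := by
  by_cases h : x ∈ s <;> simp [h]

lemma symm_eq (p : ℝ × ℝ) :
    Complex.polarCoord.symm p = (p.1 : ℂ) * Complex.exp ((p.2:ℂ) * Complex.I) := by
  rw [Complex.polarCoord_symm_apply, Complex.exp_mul_I, Complex.ofReal_cos, Complex.ofReal_sin]

lemma abs_mul_exp (s ψ : ℝ) :
    ‖(s:ℂ) * Complex.exp ((ψ:ℂ) * Complex.I)‖ = |s| := by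
  rw [norm_mul, Complex.norm_exp_ofReal_mul_I, Complex.norm_real, Real.norm_eq_abs, mul_one]

lemma cont_mul_exp : Continuous (fun p : ℝ × ℝ => (p.1 : ℂ) * Complex.exp ((p.2:ℂ) * Complex.I)) := by
  apply Continuous.mul
  · exact Complex.continuous_ofReal.comp continuous_fst
  · exact Complex.continuous_exp.comp
      ((Complex.continuous_ofReal.comp continuous_snd).mul continuous_const)

lemma twoD (Y : ℝ) (hY : 0 < Y) (c1 c2 : ℝ) (h1 : 0 < c1) (h12 : c1 < c2) :
    (∫ ψ in (-π)..π, (∫ s in c1..c2, gg Y ((s:ℂ) * Complex.exp ((ψ:ℂ) * Complex.I))))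
      ≤ c1⁻¹ * (∫ x in (-c2)..c2, uu Y x)^2 := by
  have hππ : (-π : ℝ) ≤ π := by linarith [Real.pi_pos]
  have hc12 : c1 ≤ c2 := h12.le
  set Φ : ℝ × ℝ → ℝ := fun p =>
    (Ioc (-π) π).indicator (fun _ => (1:ℝ)) p.2 *
      ((Ioc c1 c2).indicator (fun _ => (1:ℝ)) p.1 *
        gg Y ((p.1:ℂ) * Complex.exp ((p.2:ℂ) * Complex.I))) with hΦ
  have hΦmeas : Measurable Φ := by
    apply Measurable.mul
    · exact (measurable_const.indicator measurableSet_Ioc).comp measurable_snd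
    · apply Measurable.mul
      · exact (measurable_const.indicator measurableSet_Ioc).comp measurable_fst
      · exact (gg_meas Y).comp cont_mul_exp.measurable
  have hΦint : Integrable Φ := by
    apply Integrable.mono' (g := (Ioc c1 c2 ×ˢ Ioc (-π) π).indicator (fun _ => Y))
    · rw [integrable_indicator_iff (measurableSet_Ioc.prod measurableSet_Ioc)]
      refine integrableOn_const (ne_of_lt ?_)
      rw [Measure.volume_eq_prod, Measure.prod_prod]
      exact ENNReal.mul_lt_top measure_Ioc_lt_top measure_Ioc_lt_top
    · exact hΦmeas.aestronglyMeasurable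
    · apply ae_of_all
      intro p
      by_cases hp1 : p.1 ∈ Ioc c1 c2
      · by_cases hp2 : p.2 ∈ Ioc (-π) π
        · have : p ∈ Ioc c1 c2 ×ˢ Ioc (-π) π := ⟨hp1, hp2⟩
          rw [Set.indicator_of_mem this]
          simp only [hΦ, Set.indicator_of_mem hp1, Set.indicator_of_mem hp2, one_mul]
          rw [Real.norm_eq_abs, _root_.abs_of_nonneg (gg_nonneg Y _)]
          exact gg_le Y hY.le _
        · simp only [hΦ, Set.indicator_of_notMem hp2, zero_mul, norm_zero]
          exact Set.indicator_nonneg (fun _ _ => hY.le) _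
      · simp only [hΦ, Set.indicator_of_notMem hp1, zero_mul, mul_zero, norm_zero]
        exact Set.indicator_nonneg (fun _ _ => hY.le) _
  -- Step 1 : iterated interval integral = ∫ Φ
  have step1 : (∫ ψ in (-π)..π, (∫ s in c1..c2, gg Y ((s:ℂ) * Complex.exp ((ψ:ℂ) * Complex.I))))
      = ∫ p : ℝ × ℝ, Φ p := by
    rw [Measure.volume_eq_prod]
    rw [integral_prod_symm Φ (by rwa [← Measure.volume_eq_prod])]
    have inner : ∀ ψ : ℝ, (∫ s : ℝ, Φ (s, ψ)) =
        (Ioc (-π) π).indicator (fun _ => (1:ℝ)) ψ *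
          ∫ s in c1..c2, gg Y ((s:ℂ) * Complex.exp ((ψ:ℂ) * Complex.I)) := by
      intro ψ
      simp only [hΦ]
      rw [MeasureTheory.integral_const_mul]
      congr 1
      rw [show (fun s : ℝ => (Ioc c1 c2).indicator (fun _ => (1:ℝ)) s *
            gg Y ((s:ℂ) * Complex.exp ((ψ:ℂ) * Complex.I)))
          = (Ioc c1 c2).indicator
              (fun s : ℝ => gg Y ((s:ℂ) * Complex.exp ((ψ:ℂ) * Complex.I)))
          from funext fun s => ind_one_mul _
            (fun s : ℝ => gg Y ((s:ℂ) * Complex.exp ((ψ:ℂ) * Complex.I))) s]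
      rw [MeasureTheory.integral_indicator measurableSet_Ioc]
      rw [intervalIntegral.integral_of_le hc12]
    simp_rw [inner]
    rw [show (fun ψ : ℝ => (Ioc (-π) π).indicator (fun _ => (1:ℝ)) ψ *
          ∫ s in c1..c2, gg Y ((s:ℂ) * Complex.exp ((ψ:ℂ) * Complex.I)))
        = (Ioc (-π) π).indicator
            (fun ψ : ℝ => ∫ s in c1..c2, gg Y ((s:ℂ) * Complex.exp ((ψ:ℂ) * Complex.I)))
        from funext fun ψ => ind_one_mul _
          (fun ψ : ℝ => ∫ s in c1..c2, gg Y ((s:ℂ) * Complex.exp ((ψ:ℂ) * Complex.I))) ψ]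
    rw [MeasureTheory.integral_indicator measurableSet_Ioc]
    rw [intervalIntegral.integral_of_le hππ]
  -- Step 2 : ∫ Φ = ∫ f over ℂ
  set ff : ℂ → ℝ := fun w => (Ioc c1 c2).indicator (fun t => t⁻¹) (‖w‖) * gg Y w
    with hff
  have step2 : ∫ p : ℝ × ℝ, Φ p = ∫ w : ℂ, ff w := by
    rw [← Complex.integral_comp_polarCoord_symm ff]
    rw [← MeasureTheory.integral_indicator polarCoord.open_target.measurableSet]
    apply MeasureTheory.integral_congr_ae
    have hN : volume ((Set.univ : Set ℝ) ×ˢ ({π} : Set ℝ)) = 0 := by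
      rw [Measure.volume_eq_prod, Measure.prod_prod]
      simp
    filter_upwards [measure_eq_zero_iff_ae_notMem.1 hN] with p hp
    have hppi : p.2 ≠ π := by
      intro h
      exact hp ⟨Set.mem_univ _, h⟩
    have htarget : polarCoord.target = Set.Ioi (0:ℝ) ×ˢ Set.Ioo (-π) π := rfl
    by_cases hmem : p ∈ polarCoord.target
    · rw [Set.indicator_of_mem hmem]
      rw [htarget, Set.mem_prod] at hmem
      obtain ⟨hp1, hp2⟩ := hmem
      have hp1' : (0:ℝ) < p.1 := hp1
      have hIoc : p.2 ∈ Ioc (-π) π := ⟨hp2.1, hp2.2.le⟩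
      simp only [hΦ, Set.indicator_of_mem hIoc, one_mul]
      rw [symm_eq, smul_eq_mul, hff]
      simp only []
      rw [abs_mul_exp, _root_.abs_of_pos hp1']
      by_cases hIn : p.1 ∈ Ioc c1 c2
      · rw [Set.indicator_of_mem hIn, Set.indicator_of_mem hIn]
        field_simp
      · rw [Set.indicator_of_notMem hIn, Set.indicator_of_notMem hIn]
        ring
    · rw [Set.indicator_of_notMem hmem]
      rw [htarget, Set.mem_prod] at hmem
      push_neg at hmem
      by_cases hp1 : p.1 ∈ Set.Ioi (0:ℝ)
      · have hp2 : p.2 ∉ Set.Ioo (-π) π := hmem hp1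
        have : p.2 ∉ Ioc (-π) π := by
          intro h
          exact hp2 ⟨h.1, lt_of_le_of_ne h.2 hppi⟩
        simp [hΦ, Set.indicator_of_notMem this]
      · have hp1' : p.1 ≤ 0 := not_lt.1 hp1
        have : p.1 ∉ Ioc c1 c2 := by
          intro h
          exact absurd (lt_of_lt_of_le h1 h.1.le) (not_lt.2 hp1')
        simp [hΦ, Set.indicator_of_notMem this]
  -- Step 3 : ∫ ff ≤ c1⁻¹ * ∫ product
  set hh : ℝ → ℝ := fun x => (Icc (-c2) c2).indicator (uu Y) x with hhh
  have hh_meas : Measurable hh := (uu_measurable Y).indicator measurableSet_Icc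
  have hh_nonneg : ∀ x, 0 ≤ hh x := fun x => Set.indicator_nonneg (fun t _ => uu_nonneg Y t) x
  have hh_le : ∀ x, hh x ≤ Real.sqrt Y := by
    intro x
    simp only [hhh]
    by_cases h : x ∈ Icc (-c2) c2
    · rw [Set.indicator_of_mem h]; exact uu_le_sqrtY Y x
    · rw [Set.indicator_of_notMem h]; exact Real.sqrt_nonneg Y
  have ff_meas : Measurable ff :=
    ((measurable_inv.indicator measurableSet_Ioc).comp continuous_norm.measurable).mul
      (gg_meas Y)
  have prod_meas : Measurable (fun w : ℂ => hh w.re * hh w.im) :=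
    (hh_meas.comp Complex.measurable_re).mul (hh_meas.comp Complex.measurable_im)
  have ff_int : Integrable ff := by
    apply Integrable.mono' (g := (Metric.closedBall (0:ℂ) c2).indicator (fun _ => c1⁻¹ * Y))
    · rw [integrable_indicator_iff measurableSet_closedBall]
      exact integrableOn_const measure_closedBall_lt_top.ne
    · exact ff_meas.aestronglyMeasurable
    · apply ae_of_all
      intro w
      by_cases h : ‖w‖ ∈ Ioc c1 c2
      · have hball : w ∈ Metric.closedBall (0:ℂ) c2 := by
          rw [Metric.mem_closedBall, Complex.dist_eq, sub_zero]
          exact h.2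
        rw [Set.indicator_of_mem hball, hff]
        simp only [Set.indicator_of_mem h]
        rw [Real.norm_eq_abs, _root_.abs_of_nonneg
          (mul_nonneg (inv_nonneg.2 (le_trans h1.le h.1.le)) (gg_nonneg Y w))]
        apply mul_le_mul
        · rw [inv_le_inv₀ (lt_trans h1 h.1) h1]
          exact h.1.le
        · exact gg_le Y hY.le w
        · exact gg_nonneg Y w
        · positivity
      · rw [hff]
        simp only [Set.indicator_of_notMem h, zero_mul, norm_zero]
        exact Set.indicator_nonneg (fun _ _ => by positivity) _
  have prod_int : Integrable (fun w : ℂ => hh w.re * hh w.im) := by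
    apply Integrable.mono' (g := (Metric.closedBall (0:ℂ) (2*c2)).indicator (fun _ => Y))
    · rw [integrable_indicator_iff measurableSet_closedBall]
      exact integrableOn_const measure_closedBall_lt_top.ne
    · exact prod_meas.aestronglyMeasurable
    · apply ae_of_all
      intro w
      by_cases hre : w.re ∈ Icc (-c2) c2
      · by_cases him : w.im ∈ Icc (-c2) c2
        · have hball : w ∈ Metric.closedBall (0:ℂ) (2*c2) := by
            rw [Metric.mem_closedBall, Complex.dist_eq, sub_zero]
            calc ‖w‖ ≤ |w.re| + |w.im| := Complex.norm_le_abs_re_add_abs_im w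
            _ ≤ c2 + c2 := by
                apply add_le_add <;> rw [abs_le] <;> constructor
                · exact hre.1
                · exact hre.2
                · exact him.1
                · exact him.2
            _ = 2 * c2 := by ring
          rw [Set.indicator_of_mem hball]
          rw [Real.norm_eq_abs, _root_.abs_of_nonneg (mul_nonneg (hh_nonneg _) (hh_nonneg _))]
          calc hh w.re * hh w.im ≤ Real.sqrt Y * Real.sqrt Y :=
                mul_le_mul (hh_le _) (hh_le _) (hh_nonneg _) (Real.sqrt_nonneg _)
          _ = Y := Real.mul_self_sqrt hY.le
        · simp only [hhh, Set.indicator_of_notMem him, mul_zero, norm_zero]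
          exact Set.indicator_nonneg (fun _ _ => hY.le) _
      · simp only [hhh, Set.indicator_of_notMem hre, zero_mul, norm_zero]
        exact Set.indicator_nonneg (fun _ _ => hY.le) _
  have step3 : ∫ w : ℂ, ff w ≤ ∫ w : ℂ, c1⁻¹ * (hh w.re * hh w.im) := by
    apply integral_mono ff_int (prod_int.const_mul _)
    intro w
    by_cases h : ‖w‖ ∈ Ioc c1 c2
    · have hre : w.re ∈ Icc (-c2) c2 := abs_le.1 ((Complex.abs_re_le_norm w).trans h.2)
      have him : w.im ∈ Icc (-c2) c2 := abs_le.1 ((Complex.abs_im_le_norm w).trans h.2)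
      have habs : (‖w‖)⁻¹ ≤ c1⁻¹ := by
        gcongr
        exact h.1.le
      simp only [hff, hhh, Set.indicator_of_mem h, Set.indicator_of_mem hre,
        Set.indicator_of_mem him]
      calc (‖w‖)⁻¹ * gg Y w ≤ c1⁻¹ * gg Y w :=
            mul_le_mul_of_nonneg_right habs (gg_nonneg Y w)
      _ = c1⁻¹ * (uu Y w.re * uu Y w.im) := by simp only [gg]; ring
    · simp only [hff, Set.indicator_of_notMem h, zero_mul]
      have := hh_nonneg w.re
      have := hh_nonneg w.im
      positivity
  have step4 : ∫ w : ℂ, c1⁻¹ * (hh w.re * hh w.im) = c1⁻¹ * (∫ x : ℝ, hh x)^2 := by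
    rw [MeasureTheory.integral_const_mul]
    congr 1
    have h4 := MeasurePreserving.integral_comp' (f := Complex.measurableEquivRealProd)
      Complex.volume_preserving_equiv_real_prod (fun q : ℝ × ℝ => hh q.1 * hh q.2)
    have happ : ∀ w : ℂ, Complex.measurableEquivRealProd w = (w.re, w.im) := fun w => rfl
    simp only [happ] at h4
    rw [h4, Measure.volume_eq_prod, MeasureTheory.integral_prod_mul, sq]
  have step5 : ∫ x : ℝ, hh x = ∫ x in (-c2)..c2, uu Y x := by
    rw [hhh, MeasureTheory.integral_indicator measurableSet_Icc,
      MeasureTheory.integral_Icc_eq_integral_Ioc,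
      ← intervalIntegral.integral_of_le (by linarith : -(c2) ≤ c2)]
  rw [step1, step2, ← step5]
  calc ∫ w : ℂ, ff w ≤ ∫ w : ℂ, c1⁻¹ * (hh w.re * hh w.im) := step3
  _ = c1⁻¹ * (∫ x : ℝ, hh x)^2 := step4

theorem stmt_10 (A B : ℝ) (hA : 0 < A) (hAB : A < B) :
    ∃ C : ℝ, 0 < C ∧ ∀ Y : ℝ, 0 < Y → ∀ z : ℂ, z ≠ 0 →
      ∫ θ in (-π)..π, ∫ R in A..B,
          Real.sqrt (minInvDist (z * (R : ℂ) * Complex.exp (θ * Complex.I)).im Y) *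
          Real.sqrt (minInvDist (z * (R : ℂ) * Complex.exp (θ * Complex.I)).re Y) ≤
        C * max 1 (‖z‖)⁻¹ * Real.log (2 + Y) := by
  have hB : 0 < B := lt_trans hA hAB
  set K0 : ℝ := 576 * (B^2 + B) / A with hK0
  have hK0pos : 0 < K0 := by positivity
  refine ⟨2 * K0 + 1, by positivity, ?_⟩
  intro Y hY z hz
  have hr : 0 < ‖z‖ := norm_pos_iff.mpr hz
  set r : ℝ := ‖z‖ with hrdef
  -- rewrite integrand as gg
  have hgg : ∀ (w : ℂ), Real.sqrt (minInvDist w.im Y) * Real.sqrt (minInvDist w.re Y)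
      = gg Y w := fun w => rfl
  simp only [hgg]
  -- the rotated, scaled inner integral
  set Hfun : ℝ → ℝ := fun ψ =>
    ∫ R in A..B, gg Y (((r : ℝ) : ℂ) * (R:ℂ) * Complex.exp ((ψ:ℂ) * Complex.I)) with hHfun
  have rot : ∀ θ : ℝ, (∫ R in A..B, gg Y (z * (R:ℂ) * Complex.exp ((θ:ℂ) * Complex.I)))
      = Hfun (θ + Complex.arg z) := by
    intro θ
    simp only [hHfun]
    apply intervalIntegral.integral_congr
      (f := fun R : ℝ => gg Y (z * (R:ℂ) * Complex.exp ((θ:ℂ) * Complex.I)))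
      (g := fun R : ℝ => gg Y (((r : ℝ) : ℂ) * (R:ℂ) *
        Complex.exp (((θ + Complex.arg z : ℝ):ℂ) * Complex.I)))
    intro R _
    simp only []
    congr 1
    conv_lhs => rw [← Complex.norm_mul_exp_arg_mul_I z]
    rw [show ((θ + Complex.arg z : ℝ) : ℂ) * Complex.I
        = (Complex.arg z : ℂ) * Complex.I + (θ:ℂ) * Complex.I from by push_cast; ring]
    rw [Complex.exp_add, ← hrdef]
    ring
  simp only [rot]
  -- periodicity of Hfun
  have Hper : Function.Periodic Hfun (2*π) := by
    intro ψ
    simp only [hHfun]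
    apply intervalIntegral.integral_congr
      (f := fun R : ℝ => gg Y (((r : ℝ):ℂ) * (R:ℂ) *
        Complex.exp (((ψ + 2*π : ℝ):ℂ) * Complex.I)))
      (g := fun R : ℝ => gg Y (((r : ℝ):ℂ) * (R:ℂ) * Complex.exp ((ψ:ℂ) * Complex.I)))
    intro R _
    simp only []
    congr 2
    push_cast
    rw [add_mul, Complex.exp_add]
    have h2pi : Complex.exp (2*(π:ℂ)*Complex.I) = 1 := Complex.exp_two_pi_mul_I
    rw [h2pi, mul_one]
  have transl : (∫ θ in (-π)..π, Hfun (θ + Complex.arg z)) = ∫ θ in (-π)..π, Hfun θ := by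
    rw [intervalIntegral.integral_comp_add_right Hfun (Complex.arg z)]
    have h := Hper.intervalIntegral_add_eq (-π + Complex.arg z) (-π)
    have e1 : -π + Complex.arg z + 2*π = π + Complex.arg z := by ring
    have e2 : -π + 2*π = π := by ring
    rw [e1, e2] at h
    exact h
  rw [transl]
  -- scaling
  have scal : ∀ ψ : ℝ, Hfun ψ
      = r⁻¹ * ∫ s in (r*A)..(r*B), gg Y ((s:ℂ) * Complex.exp ((ψ:ℂ) * Complex.I)) := by
    intro ψ
    simp only [hHfun]
    have h := intervalIntegral.integral_comp_mul_left
      (f := fun s : ℝ => gg Y ((s:ℂ) * Complex.exp ((ψ:ℂ) * Complex.I)))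
      (a := A) (b := B) (hc := hr.ne')
    simp only [smul_eq_mul] at h
    rw [← h]
    apply intervalIntegral.integral_congr
      (f := fun R : ℝ => gg Y (((r:ℝ):ℂ) * (R:ℂ) * Complex.exp ((ψ:ℂ) * Complex.I)))
      (g := fun R : ℝ => gg Y (((r*R : ℝ):ℂ) * Complex.exp ((ψ:ℂ) * Complex.I)))
    intro R _
    simp only []
    congr 1
    push_cast
    ring
  simp only [scal]
  rw [intervalIntegral.integral_const_mul]
  -- apply twoD and oneD
  have h2D := twoD Y hY (r*A) (r*B) (by positivity) (by nlinarith)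
  have h1D := oneD Y hY (r*B) (by positivity)
  have hint_nonneg : 0 ≤ ∫ x in (-(r*B))..(r*B), uu Y x :=
    intervalIntegral.integral_nonneg (by nlinarith) (fun x _ => uu_nonneg Y x)
  have hMnn : (0:ℝ) ≤ 24 * max (r*B) (Real.sqrt (r*B)) := by
    have := Real.sqrt_nonneg (r*B)
    have : (0:ℝ) ≤ max (r*B) (Real.sqrt (r*B)) := le_max_of_le_right this
    linarith
  have hsq : (∫ x in (-(r*B))..(r*B), uu Y x)^2 ≤ (24 * max (r*B) (Real.sqrt (r*B)))^2 :=
    pow_le_pow_left₀ hint_nonneg h1D 2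
  have hKK : (∫ ψ in (-π)..π, ∫ s in (r*A)..(r*B),
        gg Y ((s:ℂ) * Complex.exp ((ψ:ℂ) * Complex.I)))
      ≤ (r*A)⁻¹ * (24 * max (r*B) (Real.sqrt (r*B)))^2 := by
    calc _ ≤ (r*A)⁻¹ * (∫ x in (-(r*B))..(r*B), uu Y x)^2 := h2D
    _ ≤ (r*A)⁻¹ * (24 * max (r*B) (Real.sqrt (r*B)))^2 := by
        apply mul_le_mul_of_nonneg_left hsq
        positivity
  -- expand the square of the max
  have hmaxsq : (24 * max (r*B) (Real.sqrt (r*B)))^2 = 576 * max ((r*B)^2) (r*B) := by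
    have h1 : (max (r*B) (Real.sqrt (r*B)))^2 = max ((r*B)^2) ((Real.sqrt (r*B))^2) := by
      rcases max_cases (r*B) (Real.sqrt (r*B)) with ⟨h, hle⟩ | ⟨h, hle⟩
      · rw [h, max_eq_left]
        exact pow_le_pow_left₀ (Real.sqrt_nonneg _) hle 2
      · rw [h, max_eq_right]
        exact pow_le_pow_left₀ (by positivity) hle.le 2
    rw [mul_pow, h1, Real.sq_sqrt (by positivity)]
    ring
  -- final arithmetic
  have hmax1 : (1:ℝ) ≤ max 1 r⁻¹ := le_max_left _ _
  have hmaxr : r⁻¹ ≤ max 1 r⁻¹ := le_max_right _ _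
  have hmaxnn : (0:ℝ) ≤ max 1 r⁻¹ := by linarith
  have hrinv : (0:ℝ) < r⁻¹ := by positivity
  have bound1 : r⁻¹ * ((r*A)⁻¹ * (576 * max ((r*B)^2) (r*B))) ≤ K0 * max 1 r⁻¹ := by
    rcases max_cases ((r*B)^2) (r*B) with ⟨h, _⟩ | ⟨h, _⟩
    · rw [h]
      have heq : r⁻¹ * ((r*A)⁻¹ * (576 * (r*B)^2)) = 576 * B^2 / A := by
        field_simp
      rw [heq]
      have h6 : 576 * B^2 / A ≤ K0 := by
        rw [hK0]
        apply (div_le_div_iff_of_pos_right hA).mpr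
        nlinarith
      calc 576 * B^2 / A ≤ K0 := h6
      _ ≤ K0 * max 1 r⁻¹ := le_mul_of_one_le_right hK0pos.le hmax1
    · rw [h]
      have heq : r⁻¹ * ((r*A)⁻¹ * (576 * (r*B))) = (576 * B / A) * r⁻¹ := by
        field_simp
      rw [heq]
      apply mul_le_mul _ hmaxr hrinv.le hK0pos.le
      rw [hK0]
      apply (div_le_div_iff_of_pos_right hA).mpr
      nlinarith
  have chain : r⁻¹ * (∫ ψ in (-π)..π, ∫ s in (r*A)..(r*B),
        gg Y ((s:ℂ) * Complex.exp ((ψ:ℂ) * Complex.I)))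
      ≤ K0 * max 1 r⁻¹ := by
    calc r⁻¹ * _ ≤ r⁻¹ * ((r*A)⁻¹ * (24 * max (r*B) (Real.sqrt (r*B)))^2) :=
          mul_le_mul_of_nonneg_left hKK (by positivity)
    _ = r⁻¹ * ((r*A)⁻¹ * (576 * max ((r*B)^2) (r*B))) := by rw [hmaxsq]
    _ ≤ K0 * max 1 r⁻¹ := bound1
  have hlog : 1/2 < Real.log (2+Y) := by
    have h7 : Real.log 2 ≤ Real.log (2+Y) :=
      Real.log_le_log (by norm_num) (by linarith)
    have h8 := Real.log_two_gt_d9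
    linarith
  calc r⁻¹ * (∫ ψ in (-π)..π, ∫ s in (r*A)..(r*B),
        gg Y ((s:ℂ) * Complex.exp ((ψ:ℂ) * Complex.I)))
      ≤ K0 * max 1 r⁻¹ := chain
  _ ≤ (2 * K0 + 1) * max 1 r⁻¹ * Real.log (2+Y) := by
      have h9 : K0 ≤ (2 * K0 + 1) * Real.log (2+Y) := by nlinarith
      calc K0 * max 1 r⁻¹ ≤ ((2 * K0 + 1) * Real.log (2+Y)) * max 1 r⁻¹ :=
            mul_le_mul_of_nonneg_right h9 hmaxnn
      _ = (2 * K0 + 1) * max 1 r⁻¹ * Real.log (2+Y) := by ring
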